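/- arXiv:2405.07242 — 2 statements merged into one kernel-verified Lean document; each statement's English description precedes it below -/
import Mathlib

section
/- Let n = ρ1 + ρ2 + w. Suppose H_x = [I_{ρ1} | A_x | B_x] is a ρ1 × n matrix over 𝔽₂ and H_z = [K | L | M] is a ρ2 × n matrix over 𝔽₂, both with column blocks of sizes ρ1, ρ2, w, and suppose H_x · H_zᵀ = 0. Define the n × n matrix E over 𝔽₂ in 3 × 3 block form (block sizes ρ1, ρ2, w) as E = [[I_{ρ1}, A_x, B_x], [0, I_{ρ2}, 0], [0, 0, I_w]]. Then H_z · Eᵀ = [0 | L | M]; that is, the CNOT layer that nulls the A_x, B_x blocks of H_x simultaneously nulls the first ρ1 columns of H_z. -/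
open Matrix

/-- Appendix A.1 of the paper. If `H_x = [I | A_x | B_x]` and
`H_z = [K | L | M]` satisfy the CSS condition `H_x · H_zᵀ = 0`, then the CNOT layer with
column-operation matrix `E = [[I, A_x, B_x], [0, I, 0], [0, 0, I]]` acting on the
Z-stabilizer matrix as `H_z ↦ H_z · Eᵀ` nulls the first `ρ1` columns of `H_z`:
`H_z · Eᵀ = [0 | L | M]`. -/
theorem cnot_layer_nulls_Z_first_columns (ρ1 ρ2 w : ℕ)
    (Ax : Matrix (Fin ρ1) (Fin ρ2) (ZMod 2)) (Bx : Matrix (Fin ρ1) (Fin w) (ZMod 2))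
    (K : Matrix (Fin ρ2) (Fin ρ1) (ZMod 2)) (L : Matrix (Fin ρ2) (Fin ρ2) (ZMod 2))
    (M : Matrix (Fin ρ2) (Fin w) (ZMod 2))
    (h : fromCols (1 : Matrix (Fin ρ1) (Fin ρ1) (ZMod 2)) (fromCols Ax Bx) *
        (fromCols K (fromCols L M))ᵀ = 0) :
    fromCols K (fromCols L M) *
      (fromBlocks (1 : Matrix (Fin ρ1) (Fin ρ1) (ZMod 2)) (fromCols Ax Bx)
        (0 : Matrix (Fin ρ2 ⊕ Fin w) (Fin ρ1) (ZMod 2))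
        (fromBlocks (1 : Matrix (Fin ρ2) (Fin ρ2) (ZMod 2)) 0 0
          (1 : Matrix (Fin w) (Fin w) (ZMod 2))))ᵀ =
      fromCols (0 : Matrix (Fin ρ2) (Fin ρ1) (ZMod 2)) (fromCols L M) := by
  set C := fromCols Ax Bx with hC
  set W := fromCols L M with hW
  rw [transpose_fromCols, fromCols_mul_fromRows, Matrix.one_mul] at h
  have hK : W * Cᵀ = K := by
    have h2 : K + W * Cᵀ = 0 := by
      have := congrArg transpose h
      rwa [transpose_add, transpose_zero, transpose_transpose, transpose_mul,
        transpose_transpose] at this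
    have h3 : W * Cᵀ = -K := eq_neg_of_add_eq_zero_right h2
    rw [h3]
    ext i j
    simp only [Matrix.neg_apply]
    exact ZMod.neg_eq_self_mod_two _
  rw [fromBlocks_transpose, fromCols_mul_fromBlocks]
  simp only [fromBlocks_transpose, transpose_zero, transpose_one, fromBlocks_one,
    Matrix.mul_one, Matrix.mul_zero, zero_add, hK]
  have hKK : K + K = 0 := by
    ext i j
    exact CharTwo.add_self_eq_zero (K i j)
  rw [hKK]
end

section
/- Let H_x be a ρ1 × n matrix and H_z a ρ2 × n matrix over 𝔽₂, and let i, j : Fin n with i ≠ j. Define E = I_n + stdBasisMatrix i j 1 and F = I_n + stdBasisMatrix j i 1 (n × n matrices over 𝔽₂). Then (H_x · E) · (H_z · F)ᵀ = H_x · H_zᵀ. In particular, if H_x · H_zᵀ = 0 then (H_x · E) · (H_z · F)ᵀ = 0. -/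
open Matrix

/-- A CNOT gate with control `i` and target `j` acts on the X-stabilizer
matrix by the column operation `H_x ↦ H_x · (1 + E_{ij})` and on the Z-stabilizer matrix by
`H_z ↦ H_z · (1 + E_{ji})`. These paired column operations preserve the CSS commutation
condition: `(H_x · E) · (H_z · F)ᵀ = H_x · H_zᵀ`; in particular they preserve
`H_x · H_zᵀ = 0`. -/
theorem cnot_preserves_css_condition (n ρ1 ρ2 : ℕ)
    (Hx : Matrix (Fin ρ1) (Fin n) (ZMod 2)) (Hz : Matrix (Fin ρ2) (Fin n) (ZMod 2))
    (i j : Fin n) (hij : i ≠ j) :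
    (Hx * (1 + Matrix.single i j (1 : ZMod 2))) *
        (Hz * (1 + Matrix.single j i (1 : ZMod 2)))ᵀ = Hx * Hzᵀ ∧
      (Hx * Hzᵀ = 0 →
        (Hx * (1 + Matrix.single i j (1 : ZMod 2))) *
          (Hz * (1 + Matrix.single j i (1 : ZMod 2)))ᵀ = 0) := by
  have htr : (Matrix.single j i (1 : ZMod 2))ᵀ = Matrix.single i j 1 := by
    ext a b; simp [Matrix.single, and_comm]
  have hsq : Matrix.single i j (1 : ZMod 2) * Matrix.single i j 1 = 0 := by
    ext a b
    rw [Matrix.mul_apply]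
    apply Finset.sum_eq_zero
    intro x _
    simp only [Matrix.single, Matrix.of_apply]
    by_cases h1 : i = a ∧ j = x
    · by_cases h2 : i = x ∧ j = b
      · exact absurd (h1.2.trans h2.1.symm) (Ne.symm hij)
      · rw [if_pos h1, one_mul, if_neg h2]
    · simp [h1]
  have hself : Matrix.single i j (1 : ZMod 2) + Matrix.single i j 1 = 0 := by
    ext a b; exact CharTwo.add_self_eq_zero _
  have key : (1 + Matrix.single i j (1 : ZMod 2)) *
      (1 + Matrix.single j i (1 : ZMod 2))ᵀ =
      (1 : Matrix (Fin n) (Fin n) (ZMod 2)) := by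
    rw [Matrix.transpose_add, Matrix.transpose_one, htr, add_mul, mul_add, mul_add,
      one_mul, one_mul, mul_one, hsq, add_zero, add_assoc, hself, add_zero]
  have main : (Hx * (1 + Matrix.single i j (1 : ZMod 2))) *
      (Hz * (1 + Matrix.single j i (1 : ZMod 2)))ᵀ = Hx * Hzᵀ := by
    rw [Matrix.transpose_mul, ← Matrix.mul_assoc, Matrix.mul_assoc Hx, key, Matrix.mul_one]
  exact ⟨main, fun h => main.trans h⟩
end
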